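/- For every nonnegative integer n, \sum_{k=0}^{n} (k+1)^3 * binom(2n+2, n-k)^2 = (n+1)^2 * binom(2n,n) * binom(2n+1,n). -/

import Mathlib

/-- Gosper certificate polynomial for the identity. -/
def gI (n k : ℤ) : ℤ :=
  2*k^4 + 10*k^3 + 17*k^2 + 12*k + 4 + n*(4*k^3 + 13*k^2 + 14*k + 8)
    + n^2*(2*k^2 + 4*k + 5) + n^3

lemma step_16 (n k : ℕ) (hk : k ≤ n) :
    ((8*n+4 : ℤ)) * ((k:ℤ)+1)^3 * (((2*n+2).choose (n+2+k) : ℤ))^2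
      = gI n k * (((2*n+2).choose (n+2+k) : ℤ))^2
        - gI (n) ((k:ℤ)+1) * (((2*n+2).choose (n+3+k) : ℤ))^2 := by
  set p : ℤ := ((2*n+2).choose (n+2+k) : ℤ) with hp
  set q : ℤ := ((2*n+2).choose (n+3+k) : ℤ) with hq
  have hrel : q * ((n:ℤ)+3+k) = p * ((n:ℤ) - k) := by
    have h1 := Nat.choose_succ_right_eq (2*n+2) (n+2+k)
    have h2 : 2*n+2 - (n+2+k) = n - k := by omega
    rw [h2] at h1
    have h3 : n + 2 + k + 1 = n + 3 + k := by omega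
    rw [h3] at h1
    have h4 := congrArg (fun x : ℕ => (x : ℤ)) h1
    push_cast at h4
    rw [Nat.cast_sub hk] at h4
    linarith [h4]
  have hne : ((n:ℤ)+3+k) ^ 2 ≠ 0 := by positivity
  apply mul_left_cancel₀ hne
  have hsq : q^2 * ((n:ℤ)+3+k)^2 = p^2 * ((n:ℤ) - k)^2 := by
    rw [← mul_pow, ← mul_pow, hrel]
  simp only [gI]
  linear_combination (2*(k:ℤ)^4 + 18*(k:ℤ)^3 + 59*(k:ℤ)^2 + 84*(k:ℤ) + 45
    + (n:ℤ)*(4*(k:ℤ)^3 + 25*(k:ℤ)^2 + 52*(k:ℤ) + 39)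
    + (n:ℤ)^2*(2*(k:ℤ)^2 + 8*(k:ℤ) + 11) + (n:ℤ)^3) * hsq

theorem stmt_16 (n : ℕ) :
    ∑ k ∈ Finset.range (n + 1), (k + 1) ^ 3 * ((2 * n + 2).choose (n - k)) ^ 2 =
      (n + 1) ^ 2 * ((2 * n).choose n) * ((2 * n + 1).choose n) := by
  have hsymm : ∀ k, k ≤ n → (2*n+2).choose (n-k) = (2*n+2).choose (n+2+k) := by
    intro k hk
    have h' : n + 2 + k ≤ 2*n + 2 := by omega
    rw [← Nat.choose_symm h']
    congr 1
    omega
  set f : ℕ → ℤ := fun k => gI n k * (((2*n+2).choose (n+2+k) : ℤ))^2 with hf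
  have tel : ∑ k ∈ Finset.range (n+1), (f k - f (k+1)) = f 0 - f (n+1) :=
    Finset.sum_range_sub' f (n+1)
  have hfn1 : f (n+1) = 0 := by
    have h0 : (2*n+2).choose (n+2+(n+1)) = 0 := Nat.choose_eq_zero_of_lt (by omega)
    simp [hf, h0]
  have hmain : ((8*n+4 : ℤ)) * ∑ k ∈ Finset.range (n+1),
      ((k + 1 : ℕ) ^ 3 * ((2 * n + 2).choose (n - k)) ^ 2 : ℤ) = f 0 := by
    rw [Finset.mul_sum]
    rw [show f 0 = f 0 - f (n+1) by rw [hfn1]; ring, ← tel]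
    apply Finset.sum_congr rfl
    intro k hkmem
    have hk : k ≤ n := by
      have := Finset.mem_range.mp hkmem; omega
    rw [hsymm k hk]
    simp only [hf]
    rw [show n+2+(k+1) = n+3+k by omega]
    push_cast
    linear_combination step_16 n k hk
  have hf0 : f 0 = gI (n) 0 * (((2*n+2).choose n : ℤ))^2 := by
    have h0 : (2*n+2).choose (n+2+0) = (2*n+2).choose n := by
      rw [← hsymm 0 (Nat.zero_le n)]
      congr 1
    simp [hf, h0]
  -- binomial relations
  have ha := Nat.add_one_mul_choose_eq (2*n+1) n
  have hb := Nat.choose_succ_right_eq (2*n+2) n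
  rw [show 2*n+2 - n = n + 2 by omega] at hb
  rw [show 2*n+1+1 = 2*n+2 by omega] at ha
  have h2' : (2*n+2) * (2*n+1).choose n = (2*n+2).choose n * (n+2) := by
    rw [ha, hb]
  have h1 : ((n:ℤ)+2) * ((2*n+2).choose n : ℤ) = (2*(n:ℤ)+2) * ((2*n+1).choose n : ℤ) := by
    have h := congrArg (fun x : ℕ => (x : ℤ)) h2'
    push_cast at h
    linarith [h]
  have hc := Nat.add_one_mul_choose_eq (2*n) n
  have hsym2 : (2*n+1).choose (n+1) = (2*n+1).choose n := by
    rw [← Nat.choose_symm (show n+1 ≤ 2*n+1 by omega)]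
    congr 1
    omega
  rw [hsym2] at hc
  have h2 : (2*(n:ℤ)+1) * ((2*n).choose n : ℤ) = ((n:ℤ)+1) * ((2*n+1).choose n : ℤ) := by
    have h := congrArg (fun x : ℕ => (x : ℤ)) hc
    push_cast at h
    linarith [h]
  have hfinal : ((8*n+4 : ℤ)) * ∑ k ∈ Finset.range (n+1),
      ((k + 1 : ℕ) ^ 3 * ((2 * n + 2).choose (n - k)) ^ 2 : ℤ)
      = ((8*n+4 : ℤ)) * (((n:ℤ)+1)^2 * ((2*n).choose n : ℤ) * ((2*n+1).choose n : ℤ)) := by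
    rw [hmain, hf0]
    simp only [gI]
    set A : ℤ := ((2*n+2).choose n : ℤ)
    set B : ℤ := ((2*n).choose n : ℤ)
    set C : ℤ := ((2*n+1).choose n : ℤ)
    linear_combination (((n:ℤ)+1) * (((n:ℤ)+2)*A + (2*(n:ℤ)+2)*C)) * h1
      - (4*((n:ℤ)+1)^2*C) * h2
  have hcancel : (∑ k ∈ Finset.range (n+1),
      ((k + 1 : ℕ) ^ 3 * ((2 * n + 2).choose (n - k)) ^ 2 : ℤ))
      = ((n:ℤ)+1)^2 * ((2*n).choose n : ℤ) * ((2*n+1).choose n : ℤ) := by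
    have hne : ((8*n+4 : ℤ)) ≠ 0 := by positivity
    exact mul_left_cancel₀ hne hfinal
  push_cast at hcancel
  exact_mod_cast hcancel
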